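/- Let H be a real Hilbert space and X ⊆ H a nonempty closed convex set, with P_X the metric projection onto X (P_X z is the unique nearest point of X to z). Let n ≥ 1, let W be an n×n symmetric doubly stochastic matrix with σ₂ := the operator norm of W − (1/n)𝟙𝟙ᵀ satisfying σ₂ < 1, and set ρ := 1 − (1 − σ₂)/4. Fix η > 0, L ≥ 0, and a point x₁ ∈ X. Suppose sequences (x_{i,t}), (y_{i,t}) in H satisfy: x_{i,1} = x₁ for all i; for each i, t there is a vector g_{i,t} ∈ H with ‖g_{i,t}‖ ≤ L such that y_{i,t+1} = P_X(x_{i,t} − η g_{i,t}); and x_{i,t+1} = y_{i,t+1} + (1/2)∑_{j=1}^n W i j (y_{j,t+1} − y_{i,t+1}). Then for every agent i and every time t, ‖x_{i,t} − x̄_t‖ ≤ 2√n η L/(1 − ρ), where x̄_t = (1/n)∑_{j=1}^n x_{j,t}. -/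

import Mathlib

open scoped BigOperators
open scoped RealInnerProductSpace

/-- `σ₂(W)`: the operator norm of `W − (1/n)𝟙𝟙ᵀ` acting on Euclidean `n`-space. -/
noncomputable def sigma2 {n : ℕ} (W : Matrix (Fin n) (Fin n) ℝ) : ℝ :=
  ‖(Matrix.toEuclideanCLM (𝕜 := ℝ) (W - (n : ℝ)⁻¹ • Matrix.of fun _ _ => (1 : ℝ)) :
      EuclideanSpace ℝ (Fin n) →L[ℝ] EuclideanSpace ℝ (Fin n))‖

/-- A coordinate is bounded by the Euclidean norm. -/
lemma abs_coord_le_norm {n : ℕ} (v : EuclideanSpace ℝ (Fin n)) (i : Fin n) : |v i| ≤ ‖v‖ := by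
  rw [EuclideanSpace.norm_eq]
  rw [← Real.sqrt_sq (abs_nonneg (v i))]
  apply Real.sqrt_le_sqrt
  simp only [Real.norm_eq_abs, sq_abs]
  exact Finset.single_le_sum (f := fun j => v j ^ 2) (fun j _ => sq_nonneg _) (Finset.mem_univ i)

/-- matrix-vector multiplication is bounded by the Euclidean operator norm. -/
lemma mulVec_norm_le {n : ℕ} (M : Matrix (Fin n) (Fin n) ℝ) (e : Fin n → ℝ) :
    ‖(WithLp.equiv 2 (Fin n → ℝ)).symm (M.mulVec e)‖ ≤
      ‖(Matrix.toEuclideanCLM (𝕜 := ℝ) M :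
          EuclideanSpace ℝ (Fin n) →L[ℝ] EuclideanSpace ℝ (Fin n))‖ *
        ‖(WithLp.equiv 2 (Fin n → ℝ)).symm e‖ := by
  have h := (Matrix.toEuclideanCLM (𝕜 := ℝ) M).le_opNorm ((WithLp.equiv 2 (Fin n → ℝ)).symm e)
  simpa [Matrix.toEuclideanCLM_toLp] using h

/-- Centering a vector does not increase its Euclidean norm. -/
lemma centered_norm_le {n : ℕ} (c : Fin n → ℝ) (m : ℝ) (hm : ∑ k, c k = (n : ℝ) * m) :
    ‖(WithLp.equiv 2 (Fin n → ℝ)).symm (fun j => c j - m)‖ ≤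
      ‖(WithLp.equiv 2 (Fin n → ℝ)).symm c‖ := by
  set cE : EuclideanSpace ℝ (Fin n) := (WithLp.equiv 2 (Fin n → ℝ)).symm c with hcE
  set bE : EuclideanSpace ℝ (Fin n) := (WithLp.equiv 2 (Fin n → ℝ)).symm (fun _ => m) with hbE
  have hEq : (WithLp.equiv 2 (Fin n → ℝ)).symm (fun j => c j - m) = cE - bE := by
    ext j
    rw [PiLp.sub_apply]
    rfl
  rw [hEq]
  have hin : (⟪cE, bE⟫ : ℝ) = (n : ℝ) * m ^ 2 := by
    have : (⟪cE, bE⟫ : ℝ) = ∑ k, c k * m := by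
      rw [PiLp.inner_apply]
      exact Finset.sum_congr rfl fun k _ => by simp [hcE, hbE, mul_comm]
    rw [this, ← Finset.sum_mul, hm]
    ring
  have hb : ‖bE‖ ^ 2 = (n : ℝ) * m ^ 2 := by
    rw [← real_inner_self_eq_norm_sq]
    have : (⟪bE, bE⟫ : ℝ) = ∑ _k : Fin n, m * m := by
      rw [PiLp.inner_apply]
      rfl
    rw [this, Finset.sum_const, Finset.card_univ, Fintype.card_fin, nsmul_eq_mul]
    ring
  have hsq : ‖cE - bE‖ ^ 2 ≤ ‖cE‖ ^ 2 := by
    rw [norm_sub_sq_real, hin, hb]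
    nlinarith [mul_nonneg (Nat.cast_nonneg n : (0 : ℝ) ≤ (n : ℝ)) (sq_nonneg m)]
  have h1 := Real.sqrt_le_sqrt hsq
  rwa [Real.sqrt_sq (norm_nonneg _), Real.sqrt_sq (norm_nonneg _)] at h1

theorem stmt4 {H : Type*} [NormedAddCommGroup H] [InnerProductSpace ℝ H] [CompleteSpace H]
    (X : Set H) (hXne : X.Nonempty) (hXcl : IsClosed X) (hXcv : Convex ℝ X)
    {n : ℕ} (hn : 1 ≤ n) (W : Matrix (Fin n) (Fin n) ℝ)
    (hsymm : W.IsSymm)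
    (hnonneg : ∀ i j, 0 ≤ W i j)
    (hrow : ∀ i, ∑ j, W i j = 1)
    (hcol : ∀ j, ∑ i, W i j = 1)
    (hσ : sigma2 W < 1)
    (ρ : ℝ) (hρ : ρ = 1 - (1 - sigma2 W) / 4)
    (η L : ℝ) (hη : 0 < η) (hL : 0 ≤ L)
    (x₁ : H) (hx₁ : x₁ ∈ X)
    (x y : Fin n → ℕ → H) (g : Fin n → ℕ → H)
    (hinit : ∀ i, x i 1 = x₁)
    (hg : ∀ i t, 1 ≤ t → ‖g i t‖ ≤ L)
    -- `y i (t+1)` is the metric projection of `x i t - η • g i t` onto `X`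
    (hproj : ∀ i t, 1 ≤ t → y i (t + 1) ∈ X ∧
      ∀ w ∈ X, ‖y i (t + 1) - (x i t - η • g i t)‖ ≤ ‖w - (x i t - η • g i t)‖)
    (hcons : ∀ i t, 1 ≤ t →
      x i (t + 1) = y i (t + 1) + (2 : ℝ)⁻¹ • ∑ j, W i j • (y j (t + 1) - y i (t + 1))) :
    ∀ i t, 1 ≤ t →
      ‖x i t - (n : ℝ)⁻¹ • ∑ j, x j t‖ ≤ 2 * Real.sqrt n * η * L / (1 - ρ) := by
  have hσ0 : 0 ≤ sigma2 W := norm_nonneg _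
  have hρ34 : ρ = (3 + sigma2 W) / 4 := by rw [hρ]; ring
  have hρpos : 0 < 1 - ρ := by rw [hρ]; linarith
  have hρnn : 0 ≤ ρ := by rw [hρ34]; linarith
  have hρ1 : ρ ≤ 1 := by linarith
  have hnR : (0 : ℝ) < n := by exact_mod_cast hn
  set B : ℝ := 2 * Real.sqrt n * η * L / (1 - ρ) with hBdef
  have hK0 : 0 ≤ 2 * Real.sqrt n * η * L := by positivity
  have hB0 : 0 ≤ B := div_nonneg hK0 hρpos.le
  -- the consensus update rewritten as a convex combination
  have hxid : ∀ j s, 1 ≤ s → x j (s + 1) =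
      (2 : ℝ)⁻¹ • y j (s + 1) + (2 : ℝ)⁻¹ • ∑ k, W j k • y k (s + 1) := by
    intro j s hs
    rw [hcons j s hs]
    have h1 : ∑ k, W j k • (y k (s + 1) - y j (s + 1))
        = (∑ k, W j k • y k (s + 1)) - y j (s + 1) := by
      simp only [smul_sub, Finset.sum_sub_distrib]
      rw [← Finset.sum_smul, hrow j, one_smul]
    rw [h1]
    module
  -- all iterates stay in X
  have hmem : ∀ s, 1 ≤ s → ∀ j, x j s ∈ X := by
    intro s hs
    induction s, hs using Nat.le_induction with
    | base => intro j; rw [hinit]; exact hx₁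
    | succ s hs ih =>
      intro j
      rw [hxid j s hs]
      have hz : (∑ k, W j k • y k (s + 1)) ∈ X := by
        apply hXcv.sum_mem (fun k _ => hnonneg j k) (hrow j)
        intro k _
        exact (hproj k s hs).1
      exact hXcv (hproj j s hs).1 hz (by norm_num) (by norm_num) (by norm_num)
  -- one-step movement bound
  have hy : ∀ j s, 1 ≤ s → ‖y j (s + 1) - x j s‖ ≤ 2 * η * L := by
    intro j s hs
    have h1 := (hproj j s hs).2 (x j s) (hmem s hs j)
    have h2 : ‖x j s - (x j s - η • g j s)‖ = η * ‖g j s‖ := by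
      rw [sub_sub_cancel, norm_smul, Real.norm_eq_abs, abs_of_pos hη]
    have h3 : η * ‖g j s‖ ≤ η * L := mul_le_mul_of_nonneg_left (hg j s hs) hη.le
    have h4 : y j (s + 1) - x j s
        = (y j (s + 1) - (x j s - η • g j s)) + (-(η • g j s)) := by abel
    calc ‖y j (s + 1) - x j s‖
        ≤ ‖y j (s + 1) - (x j s - η • g j s)‖ + ‖-(η • g j s)‖ := by
          rw [h4]; exact norm_add_le _ _
      _ ≤ η * L + η * L := by
          refine add_le_add (h1.trans (h2 ▸ h3)) ?_
          rw [norm_neg, norm_smul, Real.norm_eq_abs, abs_of_pos hη]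
          exact h3
      _ = 2 * η * L := by ring
  intro i t ht
  by_cases hv : x i t - (n : ℝ)⁻¹ • ∑ j, x j t = 0
  · rw [hv, norm_zero]; exact hB0
  set v : H := x i t - (n : ℝ)⁻¹ • ∑ j, x j t with hvdef
  have hvn : 0 < ‖v‖ := norm_pos_iff.mpr hv
  set u : H := ‖v‖⁻¹ • v with hu
  have hun : ‖u‖ = 1 := by
    rw [hu, norm_smul, Real.norm_eq_abs, abs_of_pos (inv_pos.mpr hvn), inv_mul_cancel₀ hvn.ne']
  set ξ : Fin n → ℕ → ℝ := fun j s => ⟪x j s, u⟫ with hξ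
  set d : ℕ → EuclideanSpace ℝ (Fin n) := fun s => (WithLp.equiv 2 (Fin n → ℝ)).symm
      (fun j => ξ j s - (n : ℝ)⁻¹ * ∑ k, ξ k s) with hd
  have hdapp : ∀ s j, d s j = ξ j s - (n : ℝ)⁻¹ * ∑ k, ξ k s := fun s j => rfl
  have key : ∀ s, 1 ≤ s → ‖d s‖ ≤ B := by
    intro s hs
    induction s, hs using Nat.le_induction with
    | base =>
      have hz : d 1 = 0 := by
        ext j
        rw [hdapp]
        simp only [hξ, hinit, Finset.sum_const, Finset.card_univ, Fintype.card_fin,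
          nsmul_eq_mul]
        field_simp
        simp
      rw [hz, norm_zero]; exact hB0
    | succ s hs ih =>
      set υ : Fin n → ℝ := fun j => ⟪y j (s + 1), u⟫ with hυ
      set c : Fin n → ℝ := fun j => υ j - ξ j s with hc
      set e : Fin n → ℝ := fun j => υ j - (n : ℝ)⁻¹ * ∑ k, υ k with he
      set M : Matrix (Fin n) (Fin n) ℝ := W - (n : ℝ)⁻¹ • Matrix.of fun _ _ => (1 : ℝ) with hM
      -- coordinate bound on the increment
      have hcabs : ∀ j, |c j| ≤ 2 * η * L := by
        intro j
        have h1 : c j = ⟪y j (s + 1) - x j s, u⟫ := by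
          rw [hc, inner_sub_left]
        rw [h1]
        calc |⟪y j (s + 1) - x j s, u⟫| ≤ ‖y j (s + 1) - x j s‖ * ‖u‖ :=
              abs_real_inner_le_norm _ _
          _ = ‖y j (s + 1) - x j s‖ := by rw [hun, mul_one]
          _ ≤ 2 * η * L := hy j s hs
      -- scalar consensus recursion
      have hscal : ∀ j, ξ j (s + 1) = 2⁻¹ * υ j + 2⁻¹ * ∑ k, W j k * υ k := by
        intro j
        simp only [hξ, hυ, hxid j s hs, inner_add_left, real_inner_smul_left, sum_inner]
      have hmean : ∑ j, ξ j (s + 1) = ∑ j, υ j := by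
        simp only [hscal]
        rw [Finset.sum_add_distrib, ← Finset.mul_sum, ← Finset.mul_sum, Finset.sum_comm]
        have : ∑ k, ∑ j, W j k * υ k = ∑ k, υ k := by
          refine Finset.sum_congr rfl fun k _ => ?_
          rw [← Finset.sum_mul, hcol k, one_mul]
        rw [this]; ring
      have hesum : ∑ k, e k = 0 := by
        simp only [he]
        rw [Finset.sum_sub_distrib, Finset.sum_const, Finset.card_univ, Fintype.card_fin,
          nsmul_eq_mul]
        field_simp
        simp
      have hMe : ∀ j, M.mulVec e j = ∑ k, W j k * e k := by
        intro j
        simp only [hM, Matrix.mulVec, dotProduct, Matrix.sub_apply, Matrix.smul_apply,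
          Matrix.of_apply, smul_eq_mul, mul_one, sub_mul]
        rw [Finset.sum_sub_distrib, ← Finset.mul_sum, hesum, mul_zero, sub_zero]
      -- the per-coordinate identity
      have hdj : ∀ j, d (s + 1) j = 2⁻¹ * e j + 2⁻¹ * M.mulVec e j := by
        intro j
        rw [hdapp, hMe, hscal, hmean]
        have hWe : ∑ k, W j k * e k
            = (∑ k, W j k * υ k) - (∑ k, W j k) * ((n : ℝ)⁻¹ * ∑ k, υ k) := by
          simp only [he, mul_sub]
          rw [Finset.sum_sub_distrib, Finset.sum_mul]
        rw [hWe, hrow j, he]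
        ring
      -- vector identity
      set eE : EuclideanSpace ℝ (Fin n) := (WithLp.equiv 2 (Fin n → ℝ)).symm e with heE
      have hdvec : d (s + 1) = (2 : ℝ)⁻¹ • eE
          + (2 : ℝ)⁻¹ • (WithLp.equiv 2 (Fin n → ℝ)).symm (M.mulVec e) := by
        ext j
        simp only [PiLp.add_apply, PiLp.smul_apply, smul_eq_mul]
        exact hdj j
      -- bound ‖eE‖
      have hcEbound : ‖(WithLp.equiv 2 (Fin n → ℝ)).symm c‖ ≤ Real.sqrt n * (2 * η * L) := by
        rw [EuclideanSpace.norm_eq]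
        have h1 : ∑ j, ‖c j‖ ^ 2 ≤ (n : ℝ) * (2 * η * L) ^ 2 := by
          calc ∑ j, ‖c j‖ ^ 2 ≤ ∑ _j : Fin n, (2 * η * L) ^ 2 := by
                refine Finset.sum_le_sum fun j _ => ?_
                rw [Real.norm_eq_abs]
                exact pow_le_pow_left₀ (abs_nonneg _) (hcabs j) 2
            _ = (n : ℝ) * (2 * η * L) ^ 2 := by
                rw [Finset.sum_const, Finset.card_univ, Fintype.card_fin, nsmul_eq_mul]
        calc Real.sqrt (∑ j, ‖c j‖ ^ 2) ≤ Real.sqrt ((n : ℝ) * (2 * η * L) ^ 2) :=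
              Real.sqrt_le_sqrt h1
          _ = Real.sqrt n * (2 * η * L) := by
              rw [Real.sqrt_mul (Nat.cast_nonneg n), Real.sqrt_sq (by positivity)]
      have hed : ∀ j, eE j - d s j = c j - (n : ℝ)⁻¹ * ∑ k, c k := by
        intro j
        have he1 : eE j = υ j - (n : ℝ)⁻¹ * ∑ k, υ k := rfl
        have hc1 : ∀ k, c k = υ k - ξ k s := fun k => rfl
        rw [he1, hdapp]
        simp only [hc1]
        rw [Finset.sum_sub_distrib]
        ring
      have hsub : ‖eE - d s‖ ≤ ‖(WithLp.equiv 2 (Fin n → ℝ)).symm c‖ := by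
        have hmsum : ∑ k, c k = (n : ℝ) * ((n : ℝ)⁻¹ * ∑ k, c k) := by
          field_simp
        have h2 : eE - d s
            = (WithLp.equiv 2 (Fin n → ℝ)).symm (fun j => c j - (n : ℝ)⁻¹ * ∑ k, c k) := by
          ext j
          rw [PiLp.sub_apply, hed j]
          rfl
        rw [h2]
        exact centered_norm_le c _ hmsum
      have heEbound : ‖eE‖ ≤ B + Real.sqrt n * (2 * η * L) := by
        calc ‖eE‖ = ‖d s + (eE - d s)‖ := by rw [add_sub_cancel]
          _ ≤ ‖d s‖ + ‖eE - d s‖ := norm_add_le _ _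
          _ ≤ B + Real.sqrt n * (2 * η * L) := add_le_add ih (hsub.trans hcEbound)
      -- contraction
      have hcontr : ‖d (s + 1)‖ ≤ ρ * ‖eE‖ := by
        have hs2 : sigma2 W = ‖(Matrix.toEuclideanCLM (𝕜 := ℝ) M :
            EuclideanSpace ℝ (Fin n) →L[ℝ] EuclideanSpace ℝ (Fin n))‖ := by
          rw [hM, sigma2]
        have h1 : ‖(WithLp.equiv 2 (Fin n → ℝ)).symm (M.mulVec e)‖ ≤ sigma2 W * ‖eE‖ := by
          rw [hs2, heE]
          exact mulVec_norm_le M e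
        calc ‖d (s + 1)‖ ≤ ‖(2 : ℝ)⁻¹ • eE‖
              + ‖(2 : ℝ)⁻¹ • (WithLp.equiv 2 (Fin n → ℝ)).symm (M.mulVec e)‖ := by
              rw [hdvec]; exact norm_add_le _ _
          _ = 2⁻¹ * ‖eE‖ + 2⁻¹ * ‖(WithLp.equiv 2 (Fin n → ℝ)).symm (M.mulVec e)‖ := by
              rw [norm_smul, norm_smul]; norm_num
          _ ≤ 2⁻¹ * ‖eE‖ + 2⁻¹ * (sigma2 W * ‖eE‖) :=
              add_le_add le_rfl (mul_le_mul_of_nonneg_left h1 (by norm_num))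
          _ = (2⁻¹ + 2⁻¹ * sigma2 W) * ‖eE‖ := by ring
          _ ≤ ρ * ‖eE‖ := by
              refine mul_le_mul_of_nonneg_right ?_ (norm_nonneg _)
              rw [hρ34]; linarith
      calc ‖d (s + 1)‖ ≤ ρ * ‖eE‖ := hcontr
        _ ≤ ρ * (B + Real.sqrt n * (2 * η * L)) :=
            mul_le_mul_of_nonneg_left heEbound hρnn
        _ ≤ B := by
            have h1 : (1 - ρ) * B = 2 * Real.sqrt n * η * L := by
              rw [hBdef]; field_simp
            nlinarith
  -- conclude
  have hfin : ‖v‖ = d t i := by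
    rw [hdapp]
    have h1 : (⟪v, u⟫ : ℝ) = ξ i t - (n : ℝ)⁻¹ * ∑ k, ξ k t := by
      simp only [hvdef, hξ, inner_sub_left, real_inner_smul_left, sum_inner]
    have h2 : (⟪v, u⟫ : ℝ) = ‖v‖ := by
      rw [hu, real_inner_smul_right, real_inner_self_eq_norm_sq]
      field_simp
    rw [← h1, h2]
  rw [hvdef] at hfin ⊢
  rw [hfin]
  exact le_trans (le_abs_self _) ((abs_coord_le_norm (d t) i).trans (key t ht))
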